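/- Let n ≥ 2, p > 1, v ∈ ℝⁿ a unit vector, A = I + (p-2)vvᵀ, and let E be an n×n real matrix with trace(E) = 0 and EA = AEᵀ. Then |Ev|² ≤ max{(n-1)/n, 1/(2(p-1))} · trace(E²). -/

import Mathlib

open Matrix Finset

section Aux
variable {n : ℕ}

private lemma vmv_mulVec (a b x : Fin n → ℝ) : (vecMulVec a b).mulVec x = (b ⬝ᵥ x) • a := by
  ext i; simp [mulVec, vecMulVec_apply, dotProduct, Finset.mul_sum, mul_comm, mul_left_comm]

private lemma trace_vmv (a b : Fin n → ℝ) : (vecMulVec a b).trace = a ⬝ᵥ b := by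
  simp [trace, vecMulVec_apply, dotProduct, diag_apply]

private lemma vmv_mul_vmv (a b c d : Fin n → ℝ) :
    vecMulVec a b * vecMulVec c d = (b ⬝ᵥ c) • vecMulVec a d := by
  ext i j
  simp [mul_apply, vecMulVec_apply, dotProduct, Finset.mul_sum, Finset.sum_mul]
  congr 1; ext k; ring

private lemma trace_mul_vmv (C : Matrix (Fin n) (Fin n) ℝ) (a b : Fin n → ℝ) :
    (C * vecMulVec a b).trace = b ⬝ᵥ C.mulVec a := by
  simp only [trace, diag_apply, mul_apply, vecMulVec_apply, dotProduct, mulVec]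
  refine Finset.sum_congr rfl fun i _ => ?_
  rw [Finset.mul_sum]
  exact Finset.sum_congr rfl fun j _ => by ring

private lemma trace_vmv_mul (C : Matrix (Fin n) (Fin n) ℝ) (a b : Fin n → ℝ) :
    (vecMulVec a b * C).trace = b ⬝ᵥ C.mulVec a := by
  rw [trace_mul_comm, trace_mul_vmv]

private lemma vmv_transpose (a b : Fin n → ℝ) : (vecMulVec a b)ᵀ = vecMulVec b a := by
  ext i j; simp [vecMulVec_apply, mul_comm]

private lemma one_add_smul_mul (a b : ℝ) (P : Matrix (Fin n) (Fin n) ℝ) (hPP : P * P = P) :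
    (1 + a • P) * (1 + b • P) = 1 + (a + b + a * b) • P := by
  have h1 : a • P * (b • P) = (a * b) • P := by
    rw [Matrix.smul_mul, Matrix.mul_smul, hPP, smul_smul]
  rw [mul_add, add_mul, add_mul, mul_one, one_mul, h1, add_smul, add_smul, mul_one]; abel

private lemma arith_key (n : ℕ) (hn : 2 ≤ n) (p : ℝ) (hp : 1 < p) (s W D : ℝ)
    (hW : s ^ 2 ≤ W) (hD : 0 ≤ D) (hC2 : s ^ 2 ≤ ((n : ℝ) - 1) * D) :
    (W + (p - 2) * s ^ 2) / (p - 1)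
      ≤ max (((n : ℝ) - 1) / n) (1 / (2 * (p - 1))) * (2 * W - s ^ 2 + D) := by
  have hn0 : (0:ℝ) < n := by positivity
  have hn2 : (2:ℝ) ≤ n := by exact_mod_cast hn
  have hp1 : (0:ℝ) < p - 1 := by linarith
  rcases le_total (((n : ℝ) - 1) / n) (1 / (2 * (p - 1))) with h | h
  · rw [max_eq_right h]
    have h' : ((n:ℝ) - 1) * (2 * (p - 1)) ≤ n := by
      rw [div_le_div_iff₀ hn0 (by linarith : (0:ℝ) < 2 * (p - 1))] at h
      linarith
    have key : ((n:ℝ) - 1) * ((2 * p - 3) * s ^ 2) ≤ s ^ 2 := by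
      nlinarith [sq_nonneg s]
    have key2 : (2 * p - 3) * s ^ 2 ≤ D := by
      have h1 : ((n:ℝ) - 1) * ((2 * p - 3) * s ^ 2) ≤ ((n:ℝ) - 1) * D :=
        le_trans key hC2
      have : (0:ℝ) < (n:ℝ) - 1 := by linarith
      exact le_of_mul_le_mul_left h1 this
    rw [one_div, div_le_iff₀ hp1, inv_mul_eq_div, div_mul_eq_mul_div,
      le_div_iff₀ (by linarith : (0:ℝ) < 2 * (p - 1))]
    nlinarith [key2, hp1]
  · rw [max_eq_left h]
    have h' : (n:ℝ) ≤ ((n:ℝ) - 1) * (2 * (p - 1)) := by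
      rw [div_le_div_iff₀ (by linarith : (0:ℝ) < 2 * (p - 1)) hn0] at h
      linarith
    rw [div_le_iff₀ hp1, div_mul_eq_mul_div, div_mul_eq_mul_div,
      le_div_iff₀ hn0]
    nlinarith [mul_nonneg (by nlinarith : (0:ℝ) ≤ ((n:ℝ) - 1) * (2 * (p - 1)) - n)
        (by linarith : (0:ℝ) ≤ W - s ^ 2),
      mul_nonneg hp1.le (by linarith : (0:ℝ) ≤ ((n:ℝ) - 1) * D - s ^ 2)]

end Aux

set_option maxHeartbeats 1000000 in
/-- `|Ev|² ≤ max {(n-1)/n, 1/(2(p-1))} · trace (E²)` for trace-free `E`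
with `E A = A Eᵀ`, `A = I + (p-2) v vᵀ`, `v` a unit vector, `p > 1`, `n ≥ 2`. -/
theorem Ev_sq_le (n : ℕ) (hn : 2 ≤ n) (p : ℝ) (hp : 1 < p)
    (v : Fin n → ℝ) (hv : v ⬝ᵥ v = 1)
    (E : Matrix (Fin n) (Fin n) ℝ) (htr : E.trace = 0)
    (hEA : E * ((1 : Matrix (Fin n) (Fin n) ℝ) + (p - 2) • vecMulVec v v)
        = ((1 : Matrix (Fin n) (Fin n) ℝ) + (p - 2) • vecMulVec v v) * Eᵀ) :
    E.mulVec v ⬝ᵥ E.mulVec v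
      ≤ max (((n : ℝ) - 1) / n) (1 / (2 * (p - 1))) * (E * E).trace := by
  have hp1 : (0:ℝ) < p - 1 := by linarith
  set P : Matrix (Fin n) (Fin n) ℝ := vecMulVec v v with hPdef
  have hPP : P * P = P := by rw [hPdef, vmv_mul_vmv, hv, one_smul]
  set q : ℝ := Real.sqrt (p - 1) with hqdef
  have hq0 : 0 < q := Real.sqrt_pos.2 hp1
  have hq2 : q * q = p - 1 := Real.mul_self_sqrt hp1.le
  set R : Matrix (Fin n) (Fin n) ℝ := 1 + (q - 1) • P with hRdef
  set R' : Matrix (Fin n) (Fin n) ℝ := 1 + (q⁻¹ - 1) • P with hR'def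
  have hRR' : R * R' = 1 := by
    rw [hRdef, hR'def, one_add_smul_mul _ _ _ hPP]
    have : (q - 1) + (q⁻¹ - 1) + (q - 1) * (q⁻¹ - 1) = 0 := by
      field_simp; ring
    rw [this, zero_smul, add_zero]
  have hR'R : R' * R = 1 := by
    rw [hRdef, hR'def, one_add_smul_mul _ _ _ hPP]
    have : (q⁻¹ - 1) + (q - 1) + (q⁻¹ - 1) * (q - 1) = 0 := by
      field_simp; ring
    rw [this, zero_smul, add_zero]
  have hA : (1 : Matrix (Fin n) (Fin n) ℝ) + (p - 2) • P = R * R := by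
    rw [hRdef, one_add_smul_mul _ _ _ hPP]
    congr 1
    congr 1
    nlinarith [hq2]
  rw [hA] at hEA
  set M : Matrix (Fin n) (Fin n) ℝ := R' * E * R with hMdef
  have hE : E = R * M * R' := by
    rw [hMdef]
    calc E = (R * R') * E * (R * R') := by rw [hRR', one_mul, mul_one]
    _ = R * (R' * E * R) * R' := by noncomm_ring
  have hMtr : M.trace = 0 := by
    rw [hMdef, trace_mul_cycle, hRR', one_mul, htr]
  have hMsym : Mᵀ = M := by
    have h1 : R' * (E * (R * R)) * R' = R' * (R * R * Eᵀ) * R' := by rw [hEA]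
    have h2 : R' * (E * (R * R)) * R' = M := by
      rw [hMdef]; calc R' * (E * (R * R)) * R' = (R' * E * R) * (R * R') := by noncomm_ring
      _ = R' * E * R := by rw [hRR', mul_one]
    have h3 : R' * (R * R * Eᵀ) * R' = R * Eᵀ * R' := by
      calc R' * (R * R * Eᵀ) * R' = (R' * R) * (R * Eᵀ * R') := by noncomm_ring
      _ = R * Eᵀ * R' := by rw [hR'R, one_mul]
    have hM2 : M = R * Eᵀ * R' := by rw [← h2, h1, h3]
    have hRt : Rᵀ = R := by
      rw [hRdef, transpose_add, transpose_one, transpose_smul, hPdef, vmv_transpose]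
    have hR't : R'ᵀ = R' := by
      rw [hR'def, transpose_add, transpose_one, transpose_smul, hPdef, vmv_transpose]
    calc Mᵀ = (R' * E * R)ᵀ := by rw [hMdef]
    _ = Rᵀ * (Eᵀ * R'ᵀ) := by rw [transpose_mul, transpose_mul]
    _ = R * Eᵀ * R' := by rw [hRt, hR't, mul_assoc]
    _ = M := hM2.symm
  have hMM : (M * M).trace = (E * E).trace := by
    have : M * M = R' * (E * E) * R := by
      rw [hMdef]
      calc (R' * E * R) * (R' * E * R) = R' * E * (R * R') * E * R := by noncomm_ring
      _ = R' * (E * E) * R := by rw [hRR']; noncomm_ring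
    rw [this, trace_mul_cycle, ← mul_assoc, hRR', one_mul]
  set w : Fin n → ℝ := M.mulVec v with hwdef
  set s : ℝ := v ⬝ᵥ w with hsdef
  set W : ℝ := w ⬝ᵥ w with hWdef
  have hR'v : R'.mulVec v = q⁻¹ • v := by
    rw [hR'def, add_mulVec, one_mulVec, smul_mulVec, hPdef, vmv_mulVec, hv, one_smul]
    ext i; simp [smul_eq_mul]; ring
  have hRw : ∀ x : Fin n → ℝ, R.mulVec x = x + ((q - 1) * (v ⬝ᵥ x)) • v := by
    intro x
    rw [hRdef, add_mulVec, one_mulVec, smul_mulVec, hPdef, vmv_mulVec, smul_smul]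
  have hEv : E.mulVec v = q⁻¹ • (w + ((q - 1) * s) • v) := by
    rw [hE, ← mulVec_mulVec, ← mulVec_mulVec, hR'v, mulVec_smul, ← hwdef, mulVec_smul,
      hRw w, ← hsdef]
  have hEvdot : E.mulVec v ⬝ᵥ E.mulVec v = (W + (p - 2) * s ^ 2) / (p - 1) := by
    rw [hEv]
    rw [smul_dotProduct, dotProduct_smul, add_dotProduct, dotProduct_add, dotProduct_add,
      smul_dotProduct, dotProduct_smul, dotProduct_smul, smul_dotProduct]
    rw [← hWdef, hv, dotProduct_comm w v, ← hsdef]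
    have hpq : q⁻¹ * q⁻¹ = (p - 1)⁻¹ := by
      rw [← mul_inv, hq2]
    simp only [smul_eq_mul]
    have hin : W + (q - 1) * s * s + ((q - 1) * s * s + (q - 1) * s * ((q - 1) * s * 1))
        = W + (p - 2) * s ^ 2 := by linear_combination s ^ 2 * hq2
    rw [hin, div_eq_inv_mul, ← hpq]
    ring
  set N : Matrix (Fin n) (Fin n) ℝ :=
    M - vecMulVec v w - vecMulVec w v + s • P with hNdef
  have hNsymM : Nᵀ = N := by
    rw [hNdef, transpose_add, transpose_sub, transpose_sub, hMsym, transpose_smul,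
      hPdef, vmv_transpose, vmv_transpose, vmv_transpose]
    abel
  have hNsym : ∀ i j, N j i = N i j := by
    intro i j
    rw [show N j i = Nᵀ i j from (transpose_apply _ _ _).symm, hNsymM]
  have htrN : N.trace = -s := by
    rw [hNdef, trace_add, trace_sub, trace_sub, trace_smul, hMtr, hPdef, trace_vmv,
      trace_vmv, trace_vmv, hv, dotProduct_comm w v, ← hsdef, smul_eq_mul]
    ring
  have hNv : N.mulVec v = 0 := by
    rw [hNdef, add_mulVec, sub_mulVec, sub_mulVec, smul_mulVec, hPdef,
      vmv_mulVec, vmv_mulVec, vmv_mulVec, hv, one_smul, ← hwdef,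
      dotProduct_comm w v, ← hsdef]
    ext i; simp
  have hvMw : v ⬝ᵥ M.mulVec w = W := by
    rw [dotProduct_mulVec, ← mulVec_transpose, hMsym, ← hwdef, ← hWdef]
  have hMv : M *ᵥ v = w := hwdef.symm
  have hNN : (N * N).trace = (M * M).trace - 2 * W + s ^ 2 := by
    simp only [hNdef, hPdef, sub_mul, mul_sub, add_mul, mul_add, Matrix.smul_mul,
      Matrix.mul_smul, trace_add, trace_sub, trace_smul, smul_eq_mul, vmv_mul_vmv, trace_vmv,
      trace_mul_vmv, trace_vmv_mul, vmv_mulVec, hMv, hvMw, hv]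
    simp only [dotProduct_smul, smul_eq_mul, dotProduct_comm w v, ← hsdef, ← hWdef, hv, hvMw]
    ring
  have hDpos : 0 ≤ (N * N).trace := by
    have hsq : (N * N).trace = ∑ i, ∑ j, (N i j) ^ 2 := by
      simp only [trace, diag_apply, mul_apply]
      refine Finset.sum_congr rfl fun i _ => Finset.sum_congr rfl fun j _ => ?_
      rw [hNsym i j, sq]
    rw [hsq]
    positivity
  have hsqN : ∑ i, ∑ j, (N i j) ^ 2 = (N * N).trace := by
    simp only [trace, diag_apply, mul_apply]
    refine Finset.sum_congr rfl fun i _ => Finset.sum_congr rfl fun j _ => ?_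
    rw [hNsym i j, sq]
  have hQsum : ∑ i, ∑ j, ((1 : Matrix (Fin n) (Fin n) ℝ) - P) i j * N i j = -s := by
    have h1 : ∀ i j, ((1 : Matrix (Fin n) (Fin n) ℝ) - P) i j * N i j
        = (1 : Matrix (Fin n) (Fin n) ℝ) i j * N i j - v i * (v j * N i j) := by
      intro i j
      rw [Matrix.sub_apply, hPdef, vecMulVec_apply]
      ring
    simp only [h1, Finset.sum_sub_distrib]
    have h2 : ∑ i, ∑ j, (1 : Matrix (Fin n) (Fin n) ℝ) i j * N i j = N.trace := by
      simp [one_apply, trace, diag_apply, ite_mul]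
    have h3 : ∑ i, ∑ j, v i * (v j * N i j) = v ⬝ᵥ (N.mulVec v) := by
      simp only [dotProduct, mulVec, Finset.mul_sum]
      refine Finset.sum_congr rfl fun i _ => Finset.sum_congr rfl fun j _ => by ring
    rw [h2, h3, hNv, htrN]
    simp
  have hQ2 : ∑ i, ∑ j, (((1 : Matrix (Fin n) (Fin n) ℝ) - P) i j) ^ 2 = (n : ℝ) - 1 := by
    have h1 : ∀ i j, (((1 : Matrix (Fin n) (Fin n) ℝ) - P) i j) ^ 2
        = ((1 : Matrix (Fin n) (Fin n) ℝ) i j) ^ 2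
          - 2 * ((1 : Matrix (Fin n) (Fin n) ℝ) i j * (v i * v j))
          + (v i * v i) * (v j * v j) := by
      intro i j
      rw [Matrix.sub_apply, hPdef, vecMulVec_apply]
      ring
    simp only [h1, Finset.sum_add_distrib, Finset.sum_sub_distrib]
    have h2 : ∑ i : Fin n, ∑ j, ((1 : Matrix (Fin n) (Fin n) ℝ) i j) ^ 2 = (n : ℝ) := by
      simp [one_apply, ite_pow]
    have h3 : ∑ i : Fin n, ∑ j, 2 * ((1 : Matrix (Fin n) (Fin n) ℝ) i j * (v i * v j))
        = 2 := by
      have h3' : ∀ i : Fin n, ∑ j, 2 * ((1 : Matrix (Fin n) (Fin n) ℝ) i j * (v i * v j))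
          = 2 * (v i * v i) := by
        intro i; simp [one_apply, mul_ite, ite_mul]
      rw [Finset.sum_congr rfl fun i _ => h3' i, ← Finset.mul_sum,
        show ∑ i, v i * v i = 1 from hv, mul_one]
    have h4 : ∑ i : Fin n, ∑ j, (v i * v i) * (v j * v j) = (v ⬝ᵥ v) * (v ⬝ᵥ v) := by
      rw [← Finset.sum_mul_sum]
      rfl
    rw [h2, h3, h4, hv]
    ring
  have hCS : s ^ 2 ≤ ((n : ℝ) - 1) * (N * N).trace := by
    have := Finset.sum_mul_sq_le_sq_mul_sq (Finset.univ : Finset (Fin n × Fin n))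
      (fun ij => ((1 : Matrix (Fin n) (Fin n) ℝ) - P) ij.1 ij.2)
      (fun ij => N ij.1 ij.2)
    simp only [Fintype.sum_prod_type] at this
    rw [hQsum, hQ2, hsqN] at this
    calc s ^ 2 = (-s) ^ 2 := by ring
    _ ≤ _ := this
  have hWge : s ^ 2 ≤ W := by
    have := Finset.sum_mul_sq_le_sq_mul_sq (Finset.univ : Finset (Fin n))
      (fun i => v i) (fun i => w i)
    have hvv : ∑ i, (v i) ^ 2 = 1 := by
      rw [← hv]; simp [dotProduct, sq]
    have hww : ∑ i, (w i) ^ 2 = W := by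
      rw [hWdef]; simp [dotProduct, sq]
    rw [hvv, hww, one_mul] at this
    calc s ^ 2 = (∑ i, v i * w i) ^ 2 := by rw [hsdef]; rfl
    _ ≤ W := this
  rw [hEvdot, ← hMM,
    show (M * M).trace = 2 * W - s ^ 2 + (N * N).trace by rw [hNN]; ring]
  exact arith_key n hn p hp s W ((N * N).trace) hWge hDpos hCS
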